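/- Let the block matrix [[A, X],[X*, B]] in M_{2n} be positive semidefinite, with A, B, X ∈ M_n. Then for every s > 0 there exists a unitary matrix V ∈ M_n such that |X*| ≤ (s/2) A + (1/(2s)) V* B V. -/

import Mathlib

open Matrix Set ComplexOrder
open scoped ComplexInnerProductSpace

variable {m : Type*}

/-- The modulus `|X| = (XᴴX)^{1/2}` of a matrix. -/
noncomputable def matAbs [Fintype m] [DecidableEq m] (X : Matrix m m ℂ) : Matrix m m ℂ :=
  (Matrix.posSemidef_conjTranspose_mul_self X).1.eigenvectorUnitary.1 *
    diagonal ((↑) ∘ (√·) ∘ (Matrix.posSemidef_conjTranspose_mul_self X).1.eigenvalues) *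
    (star (Matrix.posSemidef_conjTranspose_mul_self X).1.eigenvectorUnitary : Matrix m m ℂ)

theorem matAbs_posSemidef [Fintype m] [DecidableEq m] (X : Matrix m m ℂ) :
    (matAbs X).PosSemidef :=
  by
    have hD : (diagonal ((↑) ∘ (√·) ∘
        (Matrix.posSemidef_conjTranspose_mul_self X).1.eigenvalues) : Matrix m m ℂ).PosSemidef :=
      posSemidef_diagonal_iff.mpr fun i => Complex.zero_le_real.mpr (Real.sqrt_nonneg _)
    exact hD.mul_mul_conjTranspose_same _

/-- Functional calculus: apply `f : ℝ → ℝ` to a Hermitian matrix via its spectral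
decomposition (junk value `0` for non-Hermitian input). -/
noncomputable def matFun [Fintype m] [DecidableEq m] (f : ℝ → ℝ) (X : Matrix m m ℂ) :
    Matrix m m ℂ :=
  if h : X.IsHermitian then
    (h.eigenvectorUnitary : Matrix m m ℂ) *
      Matrix.diagonal (fun i => (f (h.eigenvalues i) : ℂ)) *
      star (h.eigenvectorUnitary : Matrix m m ℂ)
  else 0

/-- Real part `Re A = (A + Aᴴ)/2`. -/
noncomputable def reM (A : Matrix m m ℂ) : Matrix m m ℂ := (1/2 : ℂ) • (A + Aᴴ)

/-- Imaginary part `Im A = (A - Aᴴ)/(2i)`. -/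
noncomputable def imM (A : Matrix m m ℂ) : Matrix m m ℂ := (1/(2*Complex.I)) • (A - Aᴴ)

/-- Numerical range `W(A) = {x* A x : x*x = 1}`. -/
def numRange [Fintype m] (A : Matrix m m ℂ) : Set ℂ :=
  {z | ∃ x : m → ℂ, star x ⬝ᵥ x = 1 ∧ z = star x ⬝ᵥ A.mulVec x}

/-- The sector `S_α = {z : Re z ≥ 0, |Im z| ≤ (Re z) tan α}`. -/
def sector (α : ℝ) : Set ℂ := {z | 0 ≤ z.re ∧ |z.im| ≤ z.re * Real.tan α}

lemma toEuclideanLin_mul {n : ℕ} (A B : Matrix (Fin n) (Fin n) ℂ) :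
    Matrix.toEuclideanLin (A * B) =
      (Matrix.toEuclideanLin A).comp (Matrix.toEuclideanLin B) := by
  apply LinearMap.ext
  intro v
  simp [Matrix.toEuclideanLin_apply, Matrix.mulVec_mulVec]

open scoped MatrixOrder in
lemma matAbs_eq_sqrt {n : ℕ} (X : Matrix (Fin n) (Fin n) ℂ) :
    matAbs X = CFC.sqrt (Xᴴ * X) := by
  have h0 : (0 : Matrix (Fin n) (Fin n) ℂ) ≤ Xᴴ * X :=
    (Matrix.posSemidef_conjTranspose_mul_self X).nonneg
  rw [CFC.sqrt_eq_real_sqrt _ h0, cfcₙ_eq_cfc (hf0 := Real.sqrt_zero), (Matrix.posSemidef_conjTranspose_mul_self X).1.cfc_eq,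
    Matrix.IsHermitian.cfc, Unitary.conjStarAlgAut_apply]
  rfl

open scoped MatrixOrder in
lemma matAbs_mul_self {n : ℕ} (X : Matrix (Fin n) (Fin n) ℂ) :
    matAbs X * matAbs X = Xᴴ * X := by
  rw [matAbs_eq_sqrt]
  exact CFC.sqrt_mul_sqrt_self _ (Matrix.posSemidef_conjTranspose_mul_self X).nonneg

open scoped MatrixOrder in
lemma eq_matAbs_of_sq_eq {n : ℕ} {P : Matrix (Fin n) (Fin n) ℂ} (hP : P.PosSemidef)
    (X : Matrix (Fin n) (Fin n) ℂ) (h : P ^ 2 = Xᴴ * X) : P = matAbs X := by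
  rw [matAbs_eq_sqrt]
  exact (CFC.sqrt_unique (by rw [← pow_two]; exact h) hP.nonneg).symm

lemma exists_polar {n : ℕ} (X : Matrix (Fin n) (Fin n) ℂ) :
    ∃ U ∈ Matrix.unitaryGroup (Fin n) ℂ, X = U * matAbs X := by
  classical
  set P := matAbs X with hP
  have hPh : P.IsHermitian := (matAbs_posSemidef X).1
  set E := EuclideanSpace ℂ (Fin n)
  set x : E →ₗ[ℂ] E := Matrix.toEuclideanLin X with hx
  set p : E →ₗ[ℂ] E := Matrix.toEuclideanLin P with hp
  -- inner products agree
  have hadj : LinearMap.adjoint p = p := by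
    rw [hp, ← Matrix.toEuclideanLin_conjTranspose_eq_adjoint, hPh]
  have key : ∀ v : E, (inner ℂ (x v) (x v) : ℂ) = (inner ℂ (p v) (p v) : ℂ) := by
    intro v
    have h1 : (inner ℂ v ((Matrix.toEuclideanLin (Xᴴ * X)) v) : ℂ) = (inner ℂ (x v) (x v) : ℂ) := by
      rw [toEuclideanLin_mul, LinearMap.comp_apply, ← hx,
        Matrix.toEuclideanLin_conjTranspose_eq_adjoint, ← hx, LinearMap.adjoint_inner_right]
    have h2 : (inner ℂ v ((Matrix.toEuclideanLin (P * P)) v) : ℂ) = (inner ℂ (p v) (p v) : ℂ) := by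
      rw [toEuclideanLin_mul, LinearMap.comp_apply, ← hp, ← LinearMap.adjoint_inner_left, hadj]
    rw [← h1, ← h2, matAbs_mul_self]
  have keynorm : ∀ v : E, ‖x v‖ = ‖p v‖ := by
    intro v
    have := key v
    rw [inner_self_eq_norm_sq_to_K, inner_self_eq_norm_sq_to_K] at this
    have h2 : ‖x v‖ ^ 2 = ‖p v‖ ^ 2 := by exact_mod_cast this
    nlinarith [norm_nonneg (x v), norm_nonneg (p v)]
  have hker : LinearMap.ker p ≤ LinearMap.ker x := by
    intro v hv
    rw [LinearMap.mem_ker] at hv ⊢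
    have := keynorm v
    rw [hv, norm_zero, norm_eq_zero] at this
    exact this
  set f : (E ⧸ LinearMap.ker p) →ₗ[ℂ] E := (LinearMap.ker p).liftQ x hker with hf
  set e := p.quotKerEquivRange with he
  set L0 : LinearMap.range p →ₗ[ℂ] E := f.comp (e.symm : LinearMap.range p →ₗ[ℂ] _) with hL0
  have hL0apply : ∀ (v : E) (hv : p v ∈ LinearMap.range p), L0 ⟨p v, hv⟩ = x v := by
    intro v hv
    have hsymm : e.symm ⟨p v, hv⟩ = Submodule.Quotient.mk v := by
      apply e.injective
      rw [e.apply_symm_apply]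
      apply Subtype.ext
      exact (p.quotKerEquivRange_apply_mk v).symm
    simp only [hL0, LinearMap.comp_apply, LinearEquiv.coe_coe, hsymm, hf]
    exact Submodule.liftQ_apply _ x v
  have hL0norm : ∀ s : LinearMap.range p, ‖L0 s‖ = ‖s‖ := by
    rintro ⟨_, v, rfl⟩
    rw [hL0apply v ⟨v, rfl⟩, keynorm v]
    rfl
  set L : LinearMap.range p →ₗᵢ[ℂ] E := ⟨L0, hL0norm⟩ with hL
  set U' := L.extend with hU'
  have hU'p : ∀ v : E, U' (p v) = x v := by
    intro v
    have hmem : p v ∈ LinearMap.range p := ⟨v, rfl⟩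
    have := L.extend_apply ⟨p v, hmem⟩
    rw [hU']
    rw [show p v = ((⟨p v, hmem⟩ : LinearMap.range p) : E) from rfl, this]
    exact hL0apply v hmem
  set U : Matrix (Fin n) (Fin n) ℂ := Matrix.toEuclideanLin.symm U'.toLinearMap with hU
  have hUlin : Matrix.toEuclideanLin U = U'.toLinearMap := by
    rw [hU, LinearEquiv.apply_symm_apply]
  refine ⟨U, ?_, ?_⟩
  · rw [Matrix.mem_unitaryGroup_iff']
    apply Matrix.toEuclideanLin.injective
    rw [show (star U : Matrix (Fin n) (Fin n) ℂ) = Uᴴ from rfl, toEuclideanLin_mul,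
      Matrix.toEuclideanLin_conjTranspose_eq_adjoint, hUlin]
    apply LinearMap.ext
    intro v
    apply ext_inner_left ℂ
    intro w
    rw [LinearMap.comp_apply, LinearMap.adjoint_inner_right]
    rw [show U'.toLinearMap w = U' w from rfl, show U'.toLinearMap v = U' v from rfl,
      U'.inner_map_map]
    congr 1
    simp [Matrix.toEuclideanLin_apply, Matrix.one_mulVec]
  · apply Matrix.toEuclideanLin.injective
    rw [toEuclideanLin_mul, hUlin]
    apply LinearMap.ext
    intro v
    exact (hU'p v).symm

lemma star_mulVec_dotProduct {n : ℕ} (M : Matrix (Fin n) (Fin n) ℂ) (a b : Fin n → ℂ) :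
    star (M *ᵥ a) ⬝ᵥ b = star a ⬝ᵥ (Mᴴ *ᵥ b) := by
  rw [Matrix.star_mulVec, Matrix.dotProduct_mulVec]

theorem block_psd_abs_le_right {n : ℕ} (A B X : Matrix (Fin n) (Fin n) ℂ)
    (h : (Matrix.fromBlocks A X Xᴴ B).PosSemidef) :
    ∀ s : ℝ, 0 < s → ∃ V ∈ Matrix.unitaryGroup (Fin n) ℂ,
      ((s/2) • A + (1/(2*s)) • (Vᴴ * B * V) - matAbs Xᴴ).PosSemidef := by
  intro s hs
  have hs0 : (s : ℂ) ≠ 0 := by exact_mod_cast hs.ne'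
  obtain ⟨U, hU, hXUP⟩ := exists_polar X
  have hPh : (matAbs X).IsHermitian :=
    (matAbs_posSemidef X).1
  have hUs2 : Uᴴ * U = 1 := by
    rw [← Matrix.star_eq_conjTranspose]; exact Matrix.mem_unitaryGroup_iff'.mp hU
  -- A, B hermitian
  obtain ⟨hA, -, -, hB⟩ := Matrix.isHermitian_fromBlocks_iff.mp h.1
  -- |X*| = U |X| Uᴴ
  have hXXc : X * Xᴴ = U * (matAbs X * matAbs X) * Uᴴ := by
    conv_lhs => rw [hXUP]
    rw [Matrix.conjTranspose_mul, hPh.eq]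
    simp only [Matrix.mul_assoc]
  have hsq : (U * matAbs X * Uᴴ) ^ 2 = Xᴴᴴ * Xᴴ := by
    rw [pow_two, Matrix.conjTranspose_conjTranspose, hXXc]
    simp only [Matrix.mul_assoc]
    rw [show Uᴴ * (U * (matAbs X * Uᴴ)) = matAbs X * Uᴴ by
      rw [← Matrix.mul_assoc, hUs2, Matrix.one_mul]]
  have habs : matAbs Xᴴ = U * matAbs X * Uᴴ :=
    (eq_matAbs_of_sq_eq
      ((matAbs_posSemidef X).mul_mul_conjTranspose_same U)
      Xᴴ hsq).symm
  have hXU : X * Uᴴ = matAbs Xᴴ := by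
    rw [habs]; conv_lhs => rw [hXUP]
  have hUX : U * Xᴴ = matAbs Xᴴ := by
    rw [habs]
    conv_lhs => rw [hXUP]
    rw [Matrix.conjTranspose_mul, hPh.eq, ← Matrix.mul_assoc]
  refine ⟨Uᴴ, ?_, ?_⟩
  · rw [← Matrix.star_eq_conjTranspose]; exact Unitary.star_mem hU
  rw [Matrix.conjTranspose_conjTranspose]
  refine Matrix.PosSemidef.of_dotProduct_mulVec_nonneg ?_ ?_
  · -- Hermitian
    simp only [Matrix.IsHermitian, Matrix.conjTranspose_sub, Matrix.conjTranspose_add,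
      Matrix.conjTranspose_smul, Matrix.conjTranspose_mul, Matrix.conjTranspose_conjTranspose,
      hA.eq, hB.eq, (matAbs_posSemidef Xᴴ).1.eq,
      star_trivial, Matrix.mul_assoc]
  · -- quadratic form
    intro y
    set v : Fin n → ℂ := -((s : ℂ)⁻¹ • (Uᴴ *ᵥ y)) with hv
    have hq := h.dotProduct_mulVec_nonneg (Sum.elim y v)
    set a : ℂ := star y ⬝ᵥ (A *ᵥ y) with ha
    set b : ℂ := star y ⬝ᵥ ((U * B * Uᴴ) *ᵥ y) with hb
    set t : ℂ := star y ⬝ᵥ (matAbs Xᴴ *ᵥ y) with ht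
    have c1 : star y ⬝ᵥ (X *ᵥ v) = -((s : ℂ)⁻¹ * t) := by
      rw [hv, Matrix.mulVec_neg, Matrix.mulVec_smul, Matrix.mulVec_mulVec, hXU,
        dotProduct_neg, dotProduct_smul, ht, smul_eq_mul]
    have c2 : star v ⬝ᵥ (Xᴴ *ᵥ y) = -((s : ℂ)⁻¹ * t) := by
      rw [hv, star_neg, star_smul, neg_dotProduct, smul_dotProduct,
        star_mulVec_dotProduct, Matrix.conjTranspose_conjTranspose, Matrix.mulVec_mulVec, hUX,
        ht, smul_eq_mul]
      simp [Complex.conj_ofReal]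
    have c3 : star v ⬝ᵥ (B *ᵥ v) = (s : ℂ)⁻¹ * ((s : ℂ)⁻¹ * b) := by
      rw [hv, star_neg, star_smul, Matrix.mulVec_neg, Matrix.mulVec_smul,
        neg_dotProduct, dotProduct_neg, neg_neg, smul_dotProduct,
        dotProduct_smul, star_mulVec_dotProduct, Matrix.conjTranspose_conjTranspose,
        Matrix.mulVec_mulVec, Matrix.mulVec_mulVec, ← hb, smul_eq_mul, smul_eq_mul]
      simp [Complex.conj_ofReal]
    simp only [Function.star_sumElim, Matrix.fromBlocks_mulVec, Sum.elim_comp_inl,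
      Sum.elim_comp_inr, sumElim_dotProduct_sumElim, dotProduct_add] at hq
    rw [c1, c2, c3, ← ha] at hq
    have goal_eq : star y ⬝ᵥ (((s/2) • A + (1/(2*s)) • (U * B * Uᴴ) - matAbs Xᴴ) *ᵥ y)
        = ((s/2 : ℝ) : ℂ) * (a + -((s : ℂ)⁻¹ * t) + (-((s : ℂ)⁻¹ * t)
            + (s : ℂ)⁻¹ * ((s : ℂ)⁻¹ * b))) := by
      rw [Matrix.sub_mulVec, Matrix.add_mulVec, Matrix.smul_mulVec,
        Matrix.smul_mulVec, dotProduct_sub, dotProduct_add,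
        dotProduct_smul, dotProduct_smul, ← ha, ← hb, ← ht]
      simp only [Complex.real_smul]
      push_cast
      field_simp
      ring
    rw [goal_eq]
    exact mul_nonneg (Complex.zero_le_real.mpr (by positivity)) hq
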